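/- For every infinite 7/3-power-free binary word w, there exists a position i such that the lengths of squares beginning at position i in w are bounded; i.e., w does not contain arbitrarily large squares beginning at every position. -/

import Mathlib

set_option linter.unreachableTactic false
set_option linter.unusedTactic false

def mu (w : List Bool) : List Bool := w.flatMap (fun b => if b then [true, false] else [false, true])

def isPow (beta : ℚ) (w : List Bool) : Prop :=
  ∃ (n : ℕ) (x x' : List Bool), x ≠ [] ∧ x' <+: x ∧
    w = (List.replicate n x).flatten ++ x' ∧ beta = n + (x'.length : ℚ) / (x.length : ℚ)

def PowFree (a : ℚ) (w : List Bool) : Prop :=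
  ∀ v, v <:+: w → ∀ beta : ℚ, a ≤ beta → ¬ isPow beta v

def OverlapFree (w : List Bool) : Prop :=
  ∀ u v : List Bool, u ≠ [] → ¬ (u ++ v ++ u ++ v ++ u) <:+: w

def seg (w : ℕ → Bool) (i n : ℕ) : List Bool := (List.range n).map (fun j => w (i + j))

def FactorOf (v : List Bool) (w : ℕ → Bool) : Prop := ∃ i, v = seg w i v.length

def PowFreeInf (a : ℚ) (w : ℕ → Bool) : Prop :=
  ∀ v, FactorOf v w → ∀ beta : ℚ, a ≤ beta → ¬ isPow beta v

def OverlapFreeInf (w : ℕ → Bool) : Prop :=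
  ∀ u v : List Bool, u ≠ [] → ¬ FactorOf (u ++ v ++ u ++ v ++ u) w

def SqLenAt (w : ℕ → Bool) (i m : ℕ) : Prop := ∀ j < m, w (i + j) = w (i + m + j)

def SqAt (w : ℕ → Bool) (i : ℕ) : Prop := ∃ m, 0 < m ∧ SqLenAt w i m

/- ## auxiliary development -/

lemma st7_seg_length (v : ℕ → Bool) (i n : ℕ) : (seg v i n).length = n := by
  simp [seg]

lemma st7_seg_succ (v : ℕ → Bool) (i n : ℕ) :
    seg v i (n + 1) = seg v i n ++ [v (i + n)] := by
  simp [seg, List.range_succ]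

lemma st7_seg_add (v : ℕ → Bool) (i a b : ℕ) :
    seg v i (a + b) = seg v i a ++ seg v (i + a) b := by
  simp only [seg, List.range_add, List.map_append, List.map_map]
  congr 1
  apply List.map_congr_left
  intro j _
  simp [Nat.add_assoc]

lemma st7_seg_shift (v : ℕ → Bool) (i p n : ℕ)
    (h : ∀ j, j < n → v (i + j) = v (i + p + j)) :
    seg v i n = seg v (i + p) n := by
  simp only [seg]
  apply List.map_congr_left
  intro j hj
  exact h j (List.mem_range.mp hj)

lemma st7_KP (v : ℕ → Bool) (hf : PowFreeInf (7/3) v) (i p L : ℕ) (hp : 0 < p)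
    (hL : 7 * p ≤ 3 * L)
    (hper : ∀ j, j + p < L → v (i + j) = v (i + j + p)) : False := by
  have hpL : p ≤ L := by omega
  set n := L / p with hn
  set rem := L % p with hrem
  have hLdecomp : p * n + rem = L := Nat.div_add_mod L p
  have hremp : rem < p := Nat.mod_lt _ hp
  have hn1 : 1 ≤ n := by
    rw [hn]
    exact Nat.one_le_div_iff hp |>.mpr hpL
  -- the periodic decomposition
  have key : ∀ m, m * p + rem ≤ L →
      seg v i (m * p + rem) = (List.replicate m (seg v i p)).flatten ++ seg v i rem := by
    intro m
    induction m with
    | zero => intro _; simp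
    | succ m ih =>
      intro hm
      have hm' : m * p + rem ≤ L := by nlinarith
      have h1 : (m + 1) * p + rem = p + (m * p + rem) := by ring
      rw [h1, st7_seg_add]
      have hshift : seg v (i + p) (m * p + rem) = seg v i (m * p + rem) := by
        refine (st7_seg_shift v i p (m * p + rem) ?_).symm
        intro j hj
        have h2 := hper j (by omega)
        convert h2 using 2
        omega
      rw [hshift, ih hm']
      simp [List.replicate_succ, List.flatten_cons, List.append_assoc]
  -- the factor
  set x := seg v i p with hx
  set x' := seg v i rem with hx'
  have hV : seg v i L = (List.replicate n x).flatten ++ x' := by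
    rw [← hLdecomp, mul_comm p n] at *
    exact key n (le_refl _)
  have hxlen : x.length = p := st7_seg_length v i p
  have hx'len : x'.length = rem := st7_seg_length v i rem
  have hxne : x ≠ [] := by
    intro h
    rw [h] at hxlen
    simp at hxlen
    omega
  have hpref : x' <+: x := by
    refine ⟨seg v (i + rem) (p - rem), ?_⟩
    rw [hx', hx, ← st7_seg_add]
    congr 1
    omega
  have hfac : FactorOf (seg v i L) v := ⟨i, by rw [st7_seg_length]⟩
  set beta : ℚ := (n : ℚ) + (rem : ℚ) / (p : ℚ) with hbeta
  have hple : (0:ℚ) < (p:ℚ) := by exact_mod_cast hp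
  have hbeta2 : beta = ((n * p + rem : ℕ) : ℚ) / (p : ℚ) := by
    rw [hbeta]
    push_cast
    field_simp
  have hbetage : (7/3 : ℚ) ≤ beta := by
    rw [hbeta2]
    rw [div_le_div_iff₀ (by norm_num) hple]
    have : (7:ℚ) * p ≤ 3 * ((n * p + rem : ℕ) : ℚ) := by
      have h3 : 7 * p ≤ 3 * (n * p + rem) := by
        have hnl : n * p + rem = L := by
          rw [mul_comm]
          exact hLdecomp
        omega
      exact_mod_cast h3
    linarith
  exact hf (seg v i L) hfac beta hbetage
    ⟨n, x, x', hxne, hpref, hV, by rw [hbeta, hxlen, hx'len]⟩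


section Machine

variable (v : ℕ → Bool)

/-- cube kill : period 1, length 3 -/
lemma st7_K1 (hf : PowFreeInf (7/3) v) (i : ℕ)
    (h0 : v i = v (i+1)) (h1 : v (i+1) = v (i+2)) : False := by
  apply st7_KP v hf i 1 3 (by norm_num) (by norm_num)
  intro j hj
  have hj' : j < 2 := by omega
  interval_cases j
  · convert h0 using 2 <;> omega
  · convert h1 using 2 <;> omega

/-- alternation kill : period 2, length 5 -/
lemma st7_K2 (hf : PowFreeInf (7/3) v) (i : ℕ)
    (h0 : v i = v (i+2)) (h1 : v (i+1) = v (i+3)) (h2 : v (i+2) = v (i+4)) : False := by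
  apply st7_KP v hf i 2 5 (by norm_num) (by norm_num)
  intro j hj
  have hj' : j < 3 := by omega
  interval_cases j
  · convert h0 using 2 <;> omega
  · convert h1 using 2 <;> omega
  · convert h2 using 2 <;> omega

/-- (baa)^{7/3} kill : period 3, length 7 -/
lemma st7_K3 (hf : PowFreeInf (7/3) v) (i : ℕ)
    (h0 : v i = v (i+3)) (h1 : v (i+1) = v (i+4)) (h2 : v (i+2) = v (i+5))
    (h3 : v (i+3) = v (i+6)) : False := by
  apply st7_KP v hf i 3 7 (by norm_num) (by norm_num)
  intro j hj
  have hj' : j < 4 := by omega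
  interval_cases j
  · convert h0 using 2 <;> omega
  · convert h1 using 2 <;> omega
  · convert h2 using 2 <;> omega
  · convert h3 using 2 <;> omega

lemma st7_bool_chain {a b c : Bool} (h1 : a ≠ b) (h2 : b ≠ c) : a = c := by
  cases a <;> cases b <;> cases c <;> simp_all

/-- four consecutive differences kill -/
lemma st7_runkill (hf : PowFreeInf (7/3) v) (a : ℕ)
    (h : ∀ e, a ≤ e → e < a + 4 → v e ≠ v (e+1)) : False := by
  have d0 : v a ≠ v (a+1) := h a (le_refl _) (by omega)
  have d1 : v (a+1) ≠ v (a+2) := by have := h (a+1) (by omega) (by omega); convert this using 2 <;> omega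
  have d2 : v (a+2) ≠ v (a+3) := by have := h (a+2) (by omega) (by omega); convert this using 2 <;> omega
  have d3 : v (a+3) ≠ v (a+4) := by have := h (a+3) (by omega) (by omega); convert this using 2 <;> omega
  exact st7_K2 v hf a (st7_bool_chain d0 d1) (st7_bool_chain d1 d2) (st7_bool_chain d2 d3)

/-- doubles exist beyond every point -/
lemma st7_exists_dbl (hf : PowFreeInf (7/3) v) (n : ℕ) :
    ∃ d, n ≤ d ∧ v d = v (d+1) := by
  by_contra h
  push_neg at h
  exact st7_runkill v hf n (fun e he _ => h e he)

/-- consecutive doubles with the lower one ≥ 1 are an even distance apart -/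
lemma st7_gap_even (hf : PowFreeInf (7/3) v) (d g : ℕ) (hd : 1 ≤ d) (hg : 1 ≤ g)
    (h1 : v d = v (d+1)) (h2 : v (d+g) = v (d+g+1))
    (hbetween : ∀ e, d < e → e < d + g → v e ≠ v (e+1)) :
    g % 2 = 0 := by
  by_contra hodd
  have hodd' : g % 2 = 1 := by omega
  -- case g = 1
  rcases Nat.lt_or_ge g 2 with hg1 | hg2
  · have hgg : g = 1 := by omega
    subst hgg
    exact st7_K1 v hf d h1 (by convert h2 using 2 <;> omega)
  rcases Nat.lt_or_ge g 4 with hg3 | hg5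
  · -- g = 3
    have hgg : g = 3 := by omega
    subst hgg
    obtain ⟨e, rfl⟩ : ∃ e, d = e + 1 := ⟨d - 1, by omega⟩
    have hv2 : v (e+2) = v (e+1) := h1.symm
    have hv3 : v (e+3) = !v (e+1) := by
      have hb := hbetween (e+2) (by omega) (by omega)
      rw [hv2] at hb
      have hb2 := Bool.eq_not_of_ne hb.symm
      convert hb2 using 2 <;> omega
    have hv4 : v (e+4) = v (e+1) := by
      have hb := hbetween (e+3) (by omega) (by omega)
      rw [hv3] at hb
      have hb2 := Bool.eq_not_of_ne hb.symm
      simp only [Bool.not_not] at hb2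
      convert hb2 using 2 <;> omega
    have hv5 : v (e+5) = v (e+1) := by
      have h2' : v (e+4) = v (e+5) := by convert h2 using 2 <;> omega
      rw [← h2', hv4]
    have hv0 : v e = !v (e+1) := by
      by_contra hne
      have hve : v e = v (e+1) := by
        cases hq1 : v e <;> cases hq2 : v (e+1) <;> simp_all
      exact st7_K1 v hf e hve h1
    have hv6 : v (e+6) = !v (e+1) := by
      by_contra hne
      have hve : v (e+6) = v (e+1) := by
        cases hq1 : v (e+6) <;> cases hq2 : v (e+1) <;> simp_all
      exact st7_K1 v hf (e+4) (by rw [hv4, hv5]) (by rw [hv5, hve])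
    exact st7_K3 v hf e (by rw [hv0, hv3]) (by rw [hv4]) (by rw [hv2, hv5])
      (by rw [hv3, hv6])
  · -- g odd ≥ 5 : alternation inside
    apply st7_runkill v hf (d+1)
    intro e he hlt
    exact hbetween e (by omega) (by omega)


/-- any two doubles at positions ≥ 1 have the same parity -/
lemma st7_same_parity (hf : PowFreeInf (7/3) v) :
    ∀ g d, 1 ≤ d → v d = v (d+1) → v (d+g) = v (d+g+1) → g % 2 = 0 := by
  intro g
  induction g using Nat.strong_induction_on with
  | _ g ih =>
    intro d hd h1 h2
    rcases Nat.eq_zero_or_pos g with rfl | hg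
    · rfl
    by_cases hbet : ∃ e, d < e ∧ e < d + g ∧ v e = v (e+1)
    · obtain ⟨e, he1, he2, he3⟩ := hbet
      have p1 : (e - d) % 2 = 0 := by
        have := ih (e - d) (by omega) d hd h1 (by convert he3 using 2 <;> omega)
        exact this
      have p2 : (d + g - e) % 2 = 0 := by
        have := ih (d + g - e) (by omega) e (by omega) he3
          (by convert h2 using 2 <;> omega)
        exact this
      omega
    · push_neg at hbet
      exact st7_gap_even v hf d g hd hg h1 h2 (fun e a b => hbet e a b)

/-- Structure lemma: the word is x ++ μ(y) with |x| = δ ≤ 2, x ∈ {ε,0,1,00,11}. -/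
lemma st7_SL (hf : PowFreeInf (7/3) v) :
    ∃ δ, δ ≤ 2 ∧ (δ = 2 → v 0 = v 1) ∧ ∀ k, v (δ + 2*k + 1) = ! v (δ + 2*k) := by
  obtain ⟨d₁, hd₁, hdbl₁⟩ := st7_exists_dbl v hf 1
  have key : ∀ d, 1 ≤ d → v d = v (d+1) → d % 2 = d₁ % 2 := by
    intro d hd hdbl
    rcases le_or_gt d d₁ with h | h
    · have := st7_same_parity v hf (d₁ - d) d hd hdbl (by convert hdbl₁ using 2 <;> omega)
      omega
    · have := st7_same_parity v hf (d - d₁) d₁ hd₁ hdbl₁ (by convert hdbl using 2 <;> omega)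
      omega
  have hpar : d₁ % 2 = 0 ∨ d₁ % 2 = 1 := by omega
  rcases hpar with hpar | hpar
  · -- doubles at even positions ⇒ δ = 1
    refine ⟨1, by omega, by omega, ?_⟩
    intro k
    by_contra hne
    have heq : v (1 + 2*k) = v (1 + 2*k + 1) := by
      cases hq1 : v (1 + 2*k) <;> cases hq2 : v (1 + 2*k + 1) <;> simp_all
    have := key (1 + 2*k) (by omega) heq
    omega
  · -- doubles at odd positions
    by_cases h0 : v 0 = v 1
    · refine ⟨2, by omega, fun _ => h0, ?_⟩
      intro k
      by_contra hne
      have heq : v (2 + 2*k) = v (2 + 2*k + 1) := by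
        cases hq1 : v (2 + 2*k) <;> cases hq2 : v (2 + 2*k + 1) <;> simp_all
      have := key (2 + 2*k) (by omega) heq
      omega
    · refine ⟨0, by omega, by omega, ?_⟩
      intro k
      by_contra hne
      have heq : v (0 + 2*k) = v (0 + 2*k + 1) := by
        cases hq1 : v (0 + 2*k) <;> cases hq2 : v (0 + 2*k + 1) <;> simp_all
      rcases Nat.eq_zero_or_pos k with rfl | hk
      · exact h0 (by simpa using heq)
      · have := key (0 + 2*k) (by omega) heq
        omega

/-- convenient form : pair relation at any position with the right parity -/
lemma st7_pair_at {δ : ℕ} (hpair : ∀ k, v (δ + 2*k + 1) = ! v (δ + 2*k))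
    (d : ℕ) (hd : δ ≤ d) (hp : d % 2 = δ % 2) : v (d+1) = ! v d := by
  obtain ⟨k, rfl⟩ : ∃ k, d = δ + 2*k := ⟨(d - δ)/2, by omega⟩
  exact hpair k

lemma st7_dbl_not_pair {δ : ℕ} (hpair : ∀ k, v (δ + 2*k + 1) = ! v (δ + 2*k))
    (d : ℕ) (hd : δ ≤ d) (hp : d % 2 = δ % 2) (hdbl : v d = v (d+1)) : False := by
  have := st7_pair_at v hpair d hd hp
  rw [← hdbl] at this
  simp at this

end Machine

section Defl

lemma st7_mu_append (a b : List Bool) : mu (a ++ b) = mu a ++ mu b := by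
  simp [mu]

lemma st7_mu_single (b : Bool) : mu [b] = [b, !b] := by
  cases b <;> simp [mu]

lemma st7_mu_length (a : List Bool) : (mu a).length = 2 * a.length := by
  induction a with
  | nil => simp [mu]
  | cons x t ih =>
    have : mu (x :: t) = mu [x] ++ mu t := by
      rw [← st7_mu_append]
      rfl
    rw [this]
    cases x <;> simp [mu] at ih ⊢ <;> omega

lemma st7_mu_ne_nil (a : List Bool) (h : a ≠ []) : mu a ≠ [] := by
  intro hc
  apply h
  have := st7_mu_length a
  rw [hc] at this
  simp at this
  exact this

lemma st7_mu_join (n : ℕ) (x : List Bool) :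
    mu ((List.replicate n x).flatten) = (List.replicate n (mu x)).flatten := by
  induction n with
  | zero => simp [mu]
  | succ n ih => simp [List.replicate_succ, st7_mu_append, ih]

lemma st7_mu_prefix {a b : List Bool} (h : a <+: b) : mu a <+: mu b := by
  obtain ⟨t, rfl⟩ := h
  exact ⟨mu t, (st7_mu_append a t).symm⟩

variable (v : ℕ → Bool) (δ : ℕ)

lemma st7_mu_seg (hpair : ∀ k, v (δ + 2*k + 1) = ! v (δ + 2*k)) (k n : ℕ) :
    mu (seg (fun j => v (δ + 2*j)) k n) = seg v (δ + 2*k) (2*n) := by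
  induction n with
  | zero => simp [seg, mu]
  | succ n ih =>
    have hsplit : seg v (δ + 2*k) (2*(n+1)) =
        seg v (δ + 2*k) (2*n) ++ seg v (δ + 2*k + 2*n) 2 := by
      rw [← st7_seg_add]
      congr 1
      try ring
    have hseg2 : seg v (δ + 2*k + 2*n) 2
        = [v (δ + 2*k + 2*n), v (δ + 2*k + 2*n + 1)] := by
      show List.map _ (List.range 2) = _
      rw [show (2:ℕ) = 1 + 1 by rfl, List.range_add]
      simp +arith [List.range_succ]
    have hz : seg (fun j => v (δ + 2*j)) k (n+1)
        = seg (fun j => v (δ + 2*j)) k n ++ [v (δ + 2*(k+n))] := by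
      have := st7_seg_succ (fun j => v (δ + 2*j)) k n
      simpa using this
    rw [hz, st7_mu_append, ih, st7_mu_single, hsplit, hseg2]
    have e2 : v (δ + 2*k + 2*n + 1) = ! v (δ + 2*(k+n)) := by
      have h := hpair (k+n)
      rw [show δ + 2*k + 2*n + 1 = δ + 2*(k+n) + 1 by ring, h]
    rw [e2, show δ + 2*k + 2*n = δ + 2*(k+n) by ring]

/-- deflation preserves 7/3-power-freeness -/
lemma st7_defl_free (hf : PowFreeInf (7/3) v)
    (hpair : ∀ k, v (δ + 2*k + 1) = ! v (δ + 2*k)) :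
    PowFreeInf (7/3) (fun j => v (δ + 2*j)) := by
  intro u hu beta hbeta hpow
  obtain ⟨k, hk⟩ := hu
  obtain ⟨n, x, x', hxne, hpref, hdecomp, hbval⟩ := hpow
  apply hf (mu u) ?_ beta hbeta
  · refine ⟨n, mu x, mu x', st7_mu_ne_nil x hxne, st7_mu_prefix hpref, ?_, ?_⟩
    · rw [hdecomp, st7_mu_append, st7_mu_join]
    · rw [hbval, st7_mu_length, st7_mu_length]
      congr 1
      push_cast
      rcases List.length_pos_iff.mpr hxne with hxl
      have hxl' : (0:ℚ) < (x.length : ℚ) := by exact_mod_cast hxl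
      field_simp
  · refine ⟨δ + 2*k, ?_⟩
    have hlen : (mu u).length = 2 * u.length := st7_mu_length u
    rw [hlen]
    conv_lhs => rw [hk]
    rw [st7_mu_seg v δ hpair]

end Defl

section OddKill

variable (v : ℕ → Bool)

/-- no square of odd period ≥ 5 begins at position 0 -/
lemma st7_odd_kill (hf : PowFreeInf (7/3) v) (δ : ℕ) (hδ : δ ≤ 2)
    (hδ2 : δ = 2 → v 0 = v 1) (hpair : ∀ k, v (δ + 2*k + 1) = ! v (δ + 2*k))
    (m : ℕ) (hodd : m % 2 = 1) (hm : 5 ≤ m)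
    (hsq : ∀ j, j < m → v j = v (m + j)) : False := by
  interval_cases δ
  · -- δ = 0 : differences at 0..3
    apply st7_runkill v hf 0
    intro e he hlt
    rcases Nat.even_or_odd e with hev | hev
    · rw [Nat.even_iff] at hev
      rw [st7_pair_at v hpair e (by omega) (by omega)]
      simp
    · rw [Nat.odd_iff] at hev
      have h1 : v e = v (m + e) := hsq e (by omega)
      have h2 : v (e+1) = v (m + (e+1)) := hsq (e+1) (by omega)
      have h3 : v (m + e + 1) = ! v (m + e) := st7_pair_at v hpair (m+e) (by omega) (by omega)
      rw [h1, h2, show m + (e+1) = m + e + 1 by omega, h3]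
      simp
  · -- δ = 1 : differences at m..m+3
    apply st7_runkill v hf m
    intro e he hlt
    rcases Nat.even_or_odd e with hev | hev
    · rw [Nat.even_iff] at hev
      -- e even > m odd, use e - m
      have h1 : v (e - m) = v e := by
        have := hsq (e - m) (by omega)
        convert this using 2 <;> omega
      have h2 : v (e - m + 1) = v (e + 1) := by
        have := hsq (e - m + 1) (by omega)
        convert this using 2 <;> omega
      have h3 : v (e - m + 1) = ! v (e - m) :=
        st7_pair_at v hpair (e - m) (by omega) (by omega)
      rw [← h1, ← h2, h3]
      simp
    · rw [Nat.odd_iff] at hev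
      rw [st7_pair_at v hpair e (by omega) (by omega)]
      simp
  · -- δ = 2
    rcases Nat.lt_or_ge m 7 with hm5 | hm7
    · -- m = 5 : explicit chase
      have hm' : m = 5 := by omega
      subst hm'
      have h01 : v 0 = v 1 := hδ2 rfl
      have p2 : v 3 = ! v 2 := st7_pair_at v hpair 2 (by omega) (by omega)
      have p4 : v 5 = ! v 4 := st7_pair_at v hpair 4 (by omega) (by omega)
      have p6 : v 7 = ! v 6 := st7_pair_at v hpair 6 (by omega) (by omega)
      have s0 : v 0 = v 5 := hsq 0 (by omega)
      have s1 : v 1 = v 6 := hsq 1 (by omega)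
      have s2 : v 2 = v 7 := hsq 2 (by omega)
      -- v4 = !v0, v2 = !v0, v3 = v0
      have hv4 : v 4 = ! v 0 := by
        rw [s0, p4]
        simp
      have hv2 : v 2 = ! v 0 := by
        rw [s2, p6, ← s1, ← h01]
      have hv3 : v 3 = v 0 := by
        rw [p2, hv2]
        simp
      -- alternation at 1..5 : K2 at 1
      apply st7_K2 v hf 1
      · show v 1 = v 3
        rw [← h01, hv3]
      · show v 2 = v 4
        rw [hv2, hv4]
      · show v 3 = v 5
        rw [← s0, hv3]
    · -- m ≥ 7 : differences at 2..5
      apply st7_runkill v hf 2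
      intro e he hlt
      rcases Nat.even_or_odd e with hev | hev
      · rw [Nat.even_iff] at hev
        rw [st7_pair_at v hpair e (by omega) (by omega)]
        simp
      · rw [Nat.odd_iff] at hev
        have h1 : v e = v (m + e) := hsq e (by omega)
        have h2 : v (e+1) = v (m + (e+1)) := hsq (e+1) (by omega)
        have h3 : v (m + e + 1) = ! v (m + e) := st7_pair_at v hpair (m+e) (by omega) (by omega)
        rw [h1, h2, show m + (e+1) = m + e + 1 by omega, h3]
        simp

end OddKill

/- ## the main machine -/

def st7_Sq (v : ℕ → Bool) (m : ℕ) : Prop := ∀ j, j < m → v j = v (m + j)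

/-- The halving machine : no two squares of periods Q+1 < R+1 at position 0
with v Q = v R, in a 7/3-power-free infinite word. -/
lemma st7_U (R : ℕ) : ∀ (v : ℕ → Bool), PowFreeInf (7/3) v → ∀ Q, Q < R →
    st7_Sq v (Q+1) → st7_Sq v (R+1) → v Q = v R → False := by
  induction R using Nat.strong_induction_on with
  | _ R ih =>
  intro v hf Q hQR sQ sR hb
  -- generic consequences
  have eQ0 : v (Q+1) = v 0 := by have := sQ 0 (by omega); convert this.symm using 2 <;> omega
  have eR0 : v (R+1) = v 0 := by have := sR 0 (by omega); convert this.symm using 2 <;> omega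
  have eR1 : v (R+2) = v 1 := by have := sR 1 (by omega); convert this.symm using 2 <;> omega
  rcases Nat.eq_zero_or_pos Q with rfl | hQ1
  · -- Q = 0 : cube at R
    have h01 : v 0 = v 1 := by have := sQ 0 (by omega); convert this using 2 <;> omega
    exact st7_K1 v hf R (by rw [eR0, ← hb]) (by rw [eR0, eR1, ← h01])
  obtain ⟨δ, hδ, hδ2, hpair⟩ := st7_SL v hf
  have eQ1 : v (Q+2) = v 1 := by have := sQ 1 (by omega); convert this.symm using 2 <;> omega
  by_cases hNodd : (R+1) % 2 = 1
  · -- R+1 odd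
    rcases Nat.lt_or_ge (R+1) 5 with hsmall | hbig
    · -- R+1 = 3, Q = 1
      have hR2 : R = 2 := by omega
      have hQ1' : Q = 1 := by omega
      subst hR2; subst hQ1'
      have a0 : v 0 = v 2 := by have := sQ 0 (by omega); convert this using 2 <;> omega
      have b0 : v 0 = v 3 := by have := sR 0 (by omega); convert this using 2 <;> omega
      have b1 : v 1 = v 4 := by have := sR 1 (by omega); convert this using 2 <;> omega
      -- v 1 = v 3 (sQ j=1) hence v1 = v0, and v2 = v0, cube at 0
      have a1 : v 1 = v 3 := by have := sQ 1 (by omega); convert this using 2 <;> omega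
      refine st7_K1 v hf 0 ?_ ?_
      · have h : v 0 = v 1 := by rw [b0, ← a1]
        convert h using 2 <;> omega
      · have h : v 1 = v 2 := by rw [a1, ← b0, a0]
        convert h using 2 <;> omega
    · exact st7_odd_kill v hf δ hδ hδ2 hpair (R+1) hNodd hbig sR
  · -- R+1 even
    by_cases hModd : (Q+1) % 2 = 1
    · -- Q+1 odd ≥ 3
      rcases Nat.lt_or_ge (Q+1) 5 with hsmall | hbig
      · -- Q = 2
        have hQ2 : Q = 2 := by omega
        subst hQ2
        have a0 : v 3 = v 0 := eQ0
        have a1 : v 4 = v 1 := eQ1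
        have a2 : v 5 = v 2 := by have := sQ 2 (by omega); convert this.symm using 2 <;> omega
        by_cases hc2 : v 2 = v 0
        · -- doubles at 2 and R
          have d2 : v 2 = v 3 := by rw [hc2, a0]
          have dR : v R = v (R+1) := by rw [eR0, ← hc2, ← hb]
          have hpar := st7_same_parity v hf (R - 2) 2 (by omega) d2
            (by convert dR using 2 <;> omega)
          omega
        · by_cases hc1 : v 1 = v 0
          · -- doubles at 3 and R+1
            have d3 : v 3 = v 4 := by rw [a0, a1, hc1]
            have dR : v (R+1) = v (R+2) := by rw [eR0, eR1, hc1]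
            have hpar := st7_same_parity v hf (R + 1 - 3) 3 (by omega) d3
              (by convert dR using 2 <;> omega)
            omega
          · -- v1 ≠ v0, v2 ≠ v0 ⇒ v1 = v2 : doubles at 1 and 4
            have d1 : v 1 = v 2 := by
              cases h1 : v 0 <;> cases h2 : v 1 <;> cases h3 : v 2 <;> simp_all
            have d4 : v 4 = v 5 := by rw [a1, a2, d1]
            have hpar := st7_same_parity v hf 3 1 (by omega) d1
              (by convert d4 using 2 <;> omega)
            omega
      · exact st7_odd_kill v hf δ hδ hδ2 hpair (Q+1) hModd hbig sQ
    · -- Q+1, R+1 both even : deflate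
      interval_cases δ
      · -- δ = 0
        set z : ℕ → Bool := fun j => v (0 + 2*j) with hzdef
        have hzf : PowFreeInf (7/3) z := st7_defl_free v 0 hf hpair
        set q2 := (Q+1)/2 with hq2def
        set r2 := (R+1)/2 with hr2def
        have hq2 : Q + 1 = 2 * q2 := by omega
        have hr2 : R + 1 = 2 * r2 := by omega
        have sQ' : st7_Sq z q2 := by
          intro k hk
          show v (0 + 2*k) = v (0 + 2*(q2 + k))
          have := sQ (2*k) (by omega)
          convert this using 2 <;> omega
        have sR' : st7_Sq z r2 := by
          intro k hk
          show v (0 + 2*k) = v (0 + 2*(r2 + k))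
          have := sR (2*k) (by omega)
          convert this using 2 <;> omega
        have hb' : z (q2 - 1) = z (r2 - 1) := by
          show v (0 + 2*(q2-1)) = v (0 + 2*(r2-1))
          have pQ : v (Q - 1 + 1) = ! v (Q - 1) := st7_pair_at v hpair (Q-1) (by omega) (by omega)
          have pR : v (R - 1 + 1) = ! v (R - 1) := st7_pair_at v hpair (R-1) (by omega) (by omega)
          have pQ' : v Q = ! v (Q-1) := by convert pQ using 2 <;> omega
          have pR' : v R = ! v (R-1) := by convert pR using 2 <;> omega
          have : v (Q-1) = v (R-1) := by
            rw [pQ', pR'] at hb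
            exact Bool.not_inj hb
          convert this using 2 <;> omega
        have sQ'' : st7_Sq z ((q2 - 1) + 1) := by
          rw [show q2 - 1 + 1 = q2 by omega]
          exact sQ'
        have sR'' : st7_Sq z ((r2 - 1) + 1) := by
          rw [show r2 - 1 + 1 = r2 by omega]
          exact sR'
        exact ih (r2 - 1) (by omega) z hzf (q2 - 1) (by omega) sQ'' sR'' hb'
      · -- δ = 1
        set z : ℕ → Bool := fun j => v (1 + 2*j) with hzdef
        have hzf : PowFreeInf (7/3) z := st7_defl_free v 1 hf hpair
        set q2 := (Q+1)/2 with hq2def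
        set r2 := (R+1)/2 with hr2def
        have hq2 : Q + 1 = 2 * q2 := by omega
        have hr2 : R + 1 = 2 * r2 := by omega
        have sQ' : st7_Sq z q2 := by
          intro k hk
          show v (1 + 2*k) = v (1 + 2*(q2 + k))
          have := sQ (1 + 2*k) (by omega)
          convert this using 2 <;> omega
        have sR' : st7_Sq z r2 := by
          intro k hk
          show v (1 + 2*k) = v (1 + 2*(r2 + k))
          have := sR (1 + 2*k) (by omega)
          convert this using 2 <;> omega
        have hb' : z (q2 - 1) = z (r2 - 1) := by
          show v (1 + 2*(q2-1)) = v (1 + 2*(r2-1))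
          convert hb using 2 <;> omega
        have sQ'' : st7_Sq z ((q2 - 1) + 1) := by
          rw [show q2 - 1 + 1 = q2 by omega]
          exact sQ'
        have sR'' : st7_Sq z ((r2 - 1) + 1) := by
          rw [show r2 - 1 + 1 = r2 by omega]
          exact sR'
        exact ih (r2 - 1) (by omega) z hzf (q2 - 1) (by omega) sQ'' sR'' hb'
      · -- δ = 2 : clash at Q+1
        have h01 : v 0 = v 1 := hδ2 rfl
        have dM : v (Q+1) = v (Q+2) := by rw [eQ0, eQ1, h01]
        exact st7_dbl_not_pair v hpair (Q+1) (by omega) (by omega) dM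

/-- squares transfer to the deflated word -/
lemma st7_defl_sq (v : ℕ → Bool) (c m : ℕ) (hm : m % 2 = 0) (hm0 : 0 < m) (hc : c ≤ 1)
    (hsq : st7_Sq v m) : st7_Sq (fun j => v (c + 2*j)) (m/2) := by
  intro k hk
  show v (c + 2*k) = v (c + 2*(m/2 + k))
  have := hsq (c + 2*k) (by omega)
  convert this using 2 <;> omega

lemma st7_bool_both {a b c : Bool} (h1 : a ≠ c) (h2 : b ≠ c) : a = b := by
  cases a <;> cases b <;> cases c <;> simp_all

lemma st7_K1z (v : ℕ → Bool) (hf : PowFreeInf (7/3) v)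
    (h0 : v 0 = v 1) (h1 : v 1 = v 2) : False := by
  refine st7_K1 v hf 0 ?_ ?_
  · convert h0 using 2 <;> omega
  · convert h1 using 2 <;> omega

/-- no three squares at position 0 of a 7/3-power-free word -/
lemma st7_noTriple (r : ℕ) : ∀ (v : ℕ → Bool), PowFreeInf (7/3) v → ∀ p q, 0 < p → p < q →
    q < r → st7_Sq v p → st7_Sq v q → st7_Sq v r → False := by
  induction r using Nat.strong_induction_on with
  | _ r ih =>
  intro v hf p q hp hpq hqr sp sq' sr
  obtain ⟨δ, hδ, hδ2, hpair⟩ := st7_SL v hf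
  have hq2' : 2 ≤ q := by omega
  have hr3 : 3 ≤ r := by omega
  have eq0 : v q = v 0 := by have := sq' 0 (by omega); convert this.symm using 2 <;> omega
  have eq1 : v (q+1) = v 1 := by have := sq' 1 (by omega); convert this.symm using 2 <;> omega
  have er0 : v r = v 0 := by have := sr 0 (by omega); convert this.symm using 2 <;> omega
  have er1 : v (r+1) = v 1 := by have := sr 1 (by omega); convert this.symm using 2 <;> omega
  -- kill all odd periods ≥ 5 outright
  have oddk : ∀ m, m % 2 = 1 → 5 ≤ m → st7_Sq v m → False := fun m h1 h2 h3 =>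
    st7_odd_kill v hf δ hδ hδ2 hpair m h1 h2 h3
  -- helper for the U-machine entry with two even squares whose preceding letters agree
  have Uentry : ∀ a b, 2 ≤ a → a < b → a % 2 = 0 → b % 2 = 0 → st7_Sq v a → st7_Sq v b →
      δ = 1 → False := by
    intro a b ha hab hae hbe sa sb hδ1
    subst hδ1
    have ea0 : v a = v 0 := by have := sa 0 (by omega); convert this.symm using 2 <;> omega
    have eb0 : v b = v 0 := by have := sb 0 (by omega); convert this.symm using 2 <;> omega
    set z : ℕ → Bool := fun j => v (1 + 2*j) with hzdef
    have hzf : PowFreeInf (7/3) z := st7_defl_free v 1 hf hpair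
    have sa' : st7_Sq z (a/2) := st7_defl_sq v 1 a hae (by omega) (by omega) sa
    have sb' : st7_Sq z (b/2) := st7_defl_sq v 1 b hbe (by omega) (by omega) sb
    have hb' : z (a/2 - 1) = z (b/2 - 1) := by
      show v (1 + 2*(a/2-1)) = v (1 + 2*(b/2-1))
      have pa : v (a-1+1) = ! v (a-1) := st7_pair_at v hpair (a-1) (by omega) (by omega)
      have pb : v (b-1+1) = ! v (b-1) := st7_pair_at v hpair (b-1) (by omega) (by omega)
      have pa' : v a = ! v (a-1) := by convert pa using 2 <;> omega
      have pb' : v b = ! v (b-1) := by convert pb using 2 <;> omega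
      have hvab : v (a-1) = v (b-1) := by
        have : (! v (a-1)) = ! v (b-1) := by rw [← pa', ← pb', ea0, eb0]
        exact Bool.not_inj this
      convert hvab using 2 <;> omega
    have sa'' : st7_Sq z ((a/2 - 1) + 1) := by
      rw [show a/2 - 1 + 1 = a/2 by omega]
      exact sa'
    have sb'' : st7_Sq z ((b/2 - 1) + 1) := by
      rw [show b/2 - 1 + 1 = b/2 by omega]
      exact sb'
    exact st7_U (b/2 - 1) z hzf (a/2 - 1) (by omega) sa'' sb'' hb'
  -- case split on p
  rcases Nat.lt_or_ge p 4 with hp4 | hp4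
  · interval_cases p
    · -- p = 1
      have h01 : v 0 = v 1 := by have := sp 0 (by omega); convert this using 2 <;> omega
      by_cases hqodd : q % 2 = 1
      · rcases Nat.lt_or_ge q 5 with hq5 | hq5
        · -- q = 3
          have hq3 : q = 3 := by omega
          subst hq3
          have a0 : v 3 = v 0 := eq0
          have a1 : v 4 = v 1 := eq1
          have d3 : v 3 = v 4 := by rw [a0, a1, h01]
          by_cases hrodd : r % 2 = 1
          · exact oddk r hrodd (by omega) sr
          · have dr : v r = v (r+1) := by rw [er0, er1, h01]
            have hpar := st7_same_parity v hf (r - 3) 3 (by omega) d3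
              (by convert dr using 2 <;> omega)
            omega
        · exact oddk q hqodd hq5 sq'
      · -- q even
        rcases Nat.lt_or_ge q 4 with hq4 | hq4
        · -- q = 2 : cube
          have hq2 : q = 2 := by omega
          subst hq2
          have a0 : v 2 = v 0 := eq0
          exact st7_K1z v hf h01 (by rw [← h01, a0])
        · -- q even ≥ 4 : double at q
          have dq : v q = v (q+1) := by rw [eq0, eq1, h01]
          by_cases hrodd : r % 2 = 1
          · exact oddk r hrodd (by omega) sr
          · interval_cases δ
            · exact st7_dbl_not_pair v hpair q (by omega) (by omega) dq
            · exact Uentry q r (by omega) hqr (by omega) (by omega) sq' sr rfl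
            · exact st7_dbl_not_pair v hpair q (by omega) (by omega) dq
    · -- p = 2
      have h02 : v 2 = v 0 := by have := sp 0 (by omega); convert this.symm using 2 <;> omega
      have h13 : v 3 = v 1 := by have := sp 1 (by omega); convert this.symm using 2 <;> omega
      by_cases h01 : v 1 = v 0
      · exact st7_K1z v hf h01.symm (by rw [h01, ← h02])
      by_cases hqodd : q % 2 = 1
      · rcases Nat.lt_or_ge q 5 with hq5 | hq5
        · -- q = 3 forces v1 = v0
          have hq3 : q = 3 := by omega
          subst hq3
          exact h01 (by rw [← h13, eq0])
        · exact oddk q hqodd hq5 sq'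
      · -- q even ≥ 4
        have hq4 : 4 ≤ q := by omega
        by_cases hrodd : r % 2 = 1
        · exact oddk r hrodd (by omega) sr
        · interval_cases δ
          · -- δ = 0 : deflate, triple (1, q/2, r/2)
            set z : ℕ → Bool := fun j => v (0 + 2*j) with hzdef
            have hzf : PowFreeInf (7/3) z := st7_defl_free v 0 hf hpair
            have s1' : st7_Sq z 1 := by
              intro k hk
              have hk0 : k = 0 := by omega
              subst hk0
              show v (0 + 2*0) = v (0 + 2*(1+0))
              convert h02.symm using 2 <;> omega
            have sq'' : st7_Sq z (q/2) := st7_defl_sq v 0 q (by omega) (by omega) (by omega) sq'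
            have sr'' : st7_Sq z (r/2) := st7_defl_sq v 0 r (by omega) (by omega) (by omega) sr
            exact ih (r/2) (by omega) z hzf 1 (q/2) (by omega) (by omega) (by omega) s1' sq'' sr''
          · -- δ = 1 : deflate, triple (1, q/2, r/2)
            set z : ℕ → Bool := fun j => v (1 + 2*j) with hzdef
            have hzf : PowFreeInf (7/3) z := st7_defl_free v 1 hf hpair
            have s1' : st7_Sq z 1 := by
              intro k hk
              have hk0 : k = 0 := by omega
              subst hk0
              show v (1 + 2*0) = v (1 + 2*(1+0))
              convert h13.symm using 2 <;> omega
            have sq'' : st7_Sq z (q/2) := st7_defl_sq v 1 q (by omega) (by omega) (by omega) sq'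
            have sr'' : st7_Sq z (r/2) := st7_defl_sq v 1 r (by omega) (by omega) (by omega) sr
            exact ih (r/2) (by omega) z hzf 1 (q/2) (by omega) (by omega) (by omega) s1' sq'' sr''
          · exact h01 ((hδ2 rfl).symm)
    · -- p = 3
      have a0 : v 3 = v 0 := by have := sp 0 (by omega); convert this.symm using 2 <;> omega
      have a1 : v 4 = v 1 := by have := sp 1 (by omega); convert this.symm using 2 <;> omega
      have a2 : v 5 = v 2 := by have := sp 2 (by omega); convert this.symm using 2 <;> omega
      by_cases hqodd : q % 2 = 1
      · exact oddk q hqodd (by omega) sq'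
      by_cases hrodd : r % 2 = 1
      · exact oddk r hrodd (by omega) sr
      have hq4 : 4 ≤ q := by omega
      by_cases h1 : v 1 = v 0
      · by_cases h2 : v 2 = v 0
        · exact st7_K1z v hf h1.symm (by rw [h1, h2])
        · -- aab : doubles at 3 and q
          have d3 : v 3 = v 4 := by rw [a0, a1, h1]
          have dq : v q = v (q+1) := by rw [eq0, eq1, h1]
          have hpar := st7_same_parity v hf (q - 3) 3 (by omega) d3
            (by convert dq using 2 <;> omega)
          omega
      · by_cases h2 : v 2 = v 0
        · -- aba : double at 2
          have d2 : v 2 = v 3 := by rw [h2, a0]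
          interval_cases δ
          · exact st7_dbl_not_pair v hpair 2 (by omega) (by omega) d2
          · exact Uentry q r (by omega) hqr (by omega) (by omega) sq' sr rfl
          · exact h1 ((hδ2 rfl).symm)
        · -- abb : doubles at 1 and 4
          have d1 : v 1 = v 2 := st7_bool_both h1 h2
          have d4 : v 4 = v 5 := by rw [a1, a2, d1]
          have hpar := st7_same_parity v hf 3 1 (by omega) d1
            (by convert d4 using 2 <;> omega)
          omega
  · -- p ≥ 4
    by_cases hpodd : p % 2 = 1
    · exact oddk p hpodd (by omega) sp
    by_cases hqodd : q % 2 = 1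
    · exact oddk q hqodd (by omega) sq'
    by_cases hrodd : r % 2 = 1
    · exact oddk r hrodd (by omega) sr
    interval_cases δ
    · -- δ = 0 : deflate triple
      set z : ℕ → Bool := fun j => v (0 + 2*j) with hzdef
      have hzf : PowFreeInf (7/3) z := st7_defl_free v 0 hf hpair
      have sp'' : st7_Sq z (p/2) := st7_defl_sq v 0 p (by omega) (by omega) (by omega) sp
      have sq'' : st7_Sq z (q/2) := st7_defl_sq v 0 q (by omega) (by omega) (by omega) sq'
      have sr'' : st7_Sq z (r/2) := st7_defl_sq v 0 r (by omega) (by omega) (by omega) sr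
      exact ih (r/2) (by omega) z hzf (p/2) (q/2) (by omega) (by omega) (by omega) sp'' sq'' sr''
    · set z : ℕ → Bool := fun j => v (1 + 2*j) with hzdef
      have hzf : PowFreeInf (7/3) z := st7_defl_free v 1 hf hpair
      have sp'' : st7_Sq z (p/2) := st7_defl_sq v 1 p (by omega) (by omega) (by omega) sp
      have sq'' : st7_Sq z (q/2) := st7_defl_sq v 1 q (by omega) (by omega) (by omega) sq'
      have sr'' : st7_Sq z (r/2) := st7_defl_sq v 1 r (by omega) (by omega) (by omega) sr
      exact ih (r/2) (by omega) z hzf (p/2) (q/2) (by omega) (by omega) (by omega) sp'' sq'' sr''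
    · -- δ = 2 : double at p clashes with pairing
      have h01 : v 0 = v 1 := hδ2 rfl
      have ep0 : v p = v 0 := by have := sp 0 (by omega); convert this.symm using 2 <;> omega
      have ep1 : v (p+1) = v 1 := by have := sp 1 (by omega); convert this.symm using 2 <;> omega
      have dp : v p = v (p+1) := by rw [ep0, ep1, h01]
      exact st7_dbl_not_pair v hpair p (by omega) (by omega) dp

theorem stmt7 (w : ℕ → Bool) (h : PowFreeInf (7/3) w) :
    ∃ i N, ∀ m, 0 < m → SqLenAt w i m → m ≤ N := by
  by_contra hc
  push_neg at hc
  have conv : ∀ m, SqLenAt w 0 m → st7_Sq w m := by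
    intro m hm j hj
    have := hm j hj
    convert this using 2 <;> omega
  obtain ⟨p, hp0, hps, hp1⟩ := hc 0 0
  obtain ⟨q, hq0, hqs, hq1⟩ := hc 0 p
  obtain ⟨r, hr0, hrs, hr1⟩ := hc 0 q
  exact st7_noTriple r w h p q hp0 hq1 hr1 (conv p hps) (conv q hqs) (conv r hrs)
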